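/- Let w : [0, ρ₀] → ℝ be a C² solution of ẅ = w(w²-1)/R² + (1/2)ẇγ on (0, ρ₀) with R > 0 on (0,ρ₀), w(0) = 1, w(ρ₀) = 1, and |w| ≤ 1. If w is not identically 1 then w has a zero in (0, ρ₀). -/

import Mathlib

open Set

theorem stmt_6 (ρ₀ : ℝ) (hρ₀ : 0 < ρ₀)
    (R γ w w' w'' : ℝ → ℝ)
    (hRcont : ContinuousOn R (Ioo 0 ρ₀)) (hγcont : ContinuousOn γ (Ioo 0 ρ₀))
    (hRpos : ∀ ρ ∈ Ioo 0 ρ₀, 0 < R ρ)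
    (hwcont : ContinuousOn w (Icc 0 ρ₀))
    (hw' : ∀ ρ ∈ Ioo 0 ρ₀, HasDerivAt w (w' ρ) ρ)
    (hw'' : ∀ ρ ∈ Ioo 0 ρ₀, HasDerivAt w' (w'' ρ) ρ)
    (heq : ∀ ρ ∈ Ioo 0 ρ₀,
      w'' ρ = w ρ * ((w ρ) ^ 2 - 1) / (R ρ) ^ 2 + (1/2) * w' ρ * γ ρ)
    (hw0 : w 0 = 1) (hwρ₀ : w ρ₀ = 1)
    (hbound : ∀ ρ ∈ Icc 0 ρ₀, |w ρ| ≤ 1)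
    (hnontriv : ¬ (∀ ρ ∈ Icc 0 ρ₀, w ρ = 1)) :
    ∃ ρ ∈ Ioo 0 ρ₀, w ρ = 0 := by
  by_contra hcon
  push_neg at hcon
  -- Step 1: w > 0 on [0, ρ₀]
  have hpos : ∀ ρ ∈ Icc 0 ρ₀, 0 < w ρ := by
    intro c hc
    by_contra hle
    push_neg at hle
    have hc0 : c ≠ 0 := by intro h; rw [h, hw0] at hle; linarith
    have hcρ₀ : c ≠ ρ₀ := by intro h; rw [h, hwρ₀] at hle; linarith
    have hcI : c ∈ Ioo 0 ρ₀ := ⟨lt_of_le_of_ne hc.1 (Ne.symm hc0), lt_of_le_of_ne hc.2 hcρ₀⟩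
    -- IVT on [0, c]
    have hsub : Icc 0 c ⊆ Icc 0 ρ₀ := Icc_subset_Icc le_rfl hc.2
    have := intermediate_value_Icc' (le_of_lt hcI.1) (hwcont.mono hsub)
    have h0mem : (0 : ℝ) ∈ Icc (w c) (w 0) := by rw [hw0]; exact ⟨hle, zero_le_one⟩
    obtain ⟨x, hx, hwx⟩ := this h0mem
    have hx0 : x ≠ 0 := by intro h; rw [h, hw0] at hwx; linarith
    exact hcon x ⟨lt_of_le_of_ne hx.1 (Ne.symm hx0), lt_of_le_of_lt hx.2 hcI.2⟩ hwx
  -- Step 2: minimum of w on [0, ρ₀]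
  obtain ⟨m, hmI, hmin⟩ := (isCompact_Icc).exists_isMinOn (nonempty_Icc.2 (le_of_lt hρ₀))
    hwcont
  obtain ⟨a, haI, haw⟩ : ∃ a ∈ Icc 0 ρ₀, w a ≠ 1 := by push_neg at hnontriv; exact hnontriv
  have hwa_lt : w a < 1 := lt_of_le_of_ne (le_of_abs_le (hbound a haI)) haw
  have hwm_lt : w m < 1 := lt_of_le_of_lt (hmin haI) hwa_lt
  have hwm_pos : 0 < w m := hpos m hmI
  have hmIoo : m ∈ Ioo 0 ρ₀ := by
    constructor
    · rcases lt_or_eq_of_le hmI.1 with h | h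
      · exact h
      · exfalso; rw [← h, hw0] at hwm_lt; linarith
    · rcases lt_or_eq_of_le hmI.2 with h | h
      · exact h
      · exfalso; rw [h, hwρ₀] at hwm_lt; linarith
  -- w'(m) = 0
  have hlocmin : IsLocalMin w m := by
    have : Icc 0 ρ₀ ∈ nhds m := by
      exact mem_nhds_iff.2 ⟨Ioo 0 ρ₀, Ioo_subset_Icc_self, isOpen_Ioo, hmIoo⟩
    exact hmin.isLocalMin this
  have hw'm : w' m = 0 := hlocmin.hasDerivAt_eq_zero (hw' m hmIoo)
  -- w''(m) < 0
  have hw''m : w'' m < 0 := by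
    rw [heq m hmIoo, hw'm]
    have hR := hRpos m hmIoo
    have h1 : w m * ((w m) ^ 2 - 1) < 0 := by nlinarith
    have : w m * ((w m) ^ 2 - 1) / (R m) ^ 2 < 0 := div_neg_of_neg_of_pos h1 (by positivity)
    linarith
  -- derive contradiction: w' < 0 just to the right of m
  have hslope : Filter.Tendsto (slope w' m) (nhdsWithin m {m}ᶜ) (nhds (w'' m)) :=
    hasDerivAt_iff_tendsto_slope.1 (hw'' m hmIoo)
  have hslope' : ∀ᶠ x in nhdsWithin m (Ioi m), slope w' m x < 0 := by
    have : ∀ᶠ x in nhdsWithin m {m}ᶜ, slope w' m x < 0 :=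
      hslope.eventually (Filter.Tendsto.eventually_lt_const hw''m Filter.tendsto_id)
    exact this.filter_mono (nhdsWithin_mono m (fun x hx => ne_of_gt hx))
  obtain ⟨u, hu, hIoo⟩ := (mem_nhdsGT_iff_exists_Ioo_subset' hmIoo.2).1 hslope'
  set c := min u ρ₀ with hc
  have hmc : m < c := lt_min hu hmIoo.2
  -- pick b ∈ (m, c); on (m, c), w' < 0
  have hw'neg : ∀ x ∈ Ioo m c, w' x < 0 := by
    intro x hx
    have hxs : x ∈ Ioo m u := ⟨hx.1, lt_of_lt_of_le hx.2 (min_le_left _ _)⟩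
    have hsl := hIoo hxs
    simp only [mem_setOf_eq, slope_def_field, hw'm] at hsl
    have hxm : 0 < x - m := by linarith [hx.1]
    rcases div_neg_iff.1 hsl with ⟨h1, h2⟩ | ⟨h1, h2⟩ <;> linarith
  -- w strictly decreasing on [m, c]
  have hanti : StrictAntiOn w (Icc m c) := by
    apply strictAntiOn_of_hasDerivWithinAt_neg (convex_Icc m c)
    · apply hwcont.mono
      apply Icc_subset_Icc (le_of_lt hmIoo.1)
      exact min_le_right _ _
    · intro x hx
      rw [interior_Icc] at hx
      have hxI : x ∈ Ioo 0 ρ₀ :=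
        ⟨lt_trans hmIoo.1 hx.1, lt_of_lt_of_le hx.2 (min_le_right _ _)⟩
      exact (hw' x hxI).hasDerivWithinAt
    · intro x hx
      rw [interior_Icc] at hx
      exact hw'neg x hx
  have hcIcc : c ∈ Icc 0 ρ₀ :=
    ⟨le_trans hmI.1 (le_of_lt hmc), min_le_right _ _⟩
  have : w c < w m := hanti (left_mem_Icc.2 (le_of_lt hmc)) ⟨le_of_lt hmc, le_rfl⟩ hmc
  exact absurd (hmin hcIcc) (not_le.2 this)
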